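/- arXiv:1202.5263 — 2 statements merged into one kernel-verified Lean document; each statement's English description precedes it below -/
import Mathlib

section
/- Error bound for a single reconstructed Fourier coefficient: let x(t) = S_t x₀ + ∫₀^t S_{t−s} f(s) ds, y(t) = C x(t), ξ(t) = ∫₀^t C S_{t−s} f(s) ds, and let y^δ ∈ L²(0,t_f;Y) be noisy data with ‖y^δ(t) − y(t)‖_Y ≤ δ for a.e. t. Suppose u ∈ L²(0, t_f; Y) and φ ∈ X satisfy ‖𝓛u − φ‖_X ≤ ε, where 𝓛u := ∫₀^{t_f} S_s^* C^* u(s) ds. Then the approximate coefficient α^δ := ∫₀^{t_f} ⟨u(t), y^δ(t) − ξ(t)⟩_Y dt satisfies |⟨x₀, φ⟩_X − α^δ| ≤ ε ‖x₀‖_X + δ √(t_f) ‖u‖_{L²(0,t_f;Y)}. -/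
open MeasureTheory Set Filter Topology

lemma aux_joint {X : Type*} [NormedAddCommGroup X] [NormedSpace ℝ X]
    (t_f M : ℝ) (S : ℝ → X →L[ℝ] X)
    (hScont : ∀ x : X, ContinuousOn (fun t => S t x) (Set.Icc 0 t_f))
    (hSbound : ∀ t ∈ Set.Icc 0 t_f, ‖S t‖ ≤ M) :
    ContinuousOn (fun q : ℝ × X => S q.1 q.2) (Set.Icc 0 t_f ×ˢ Set.univ) := by
  intro p hp
  have hp1 : p.1 ∈ Set.Icc 0 t_f := hp.1
  rw [ContinuousWithinAt, ← tendsto_sub_nhds_zero_iff]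
  have key : ∀ q ∈ Set.Icc 0 t_f ×ˢ (Set.univ : Set X),
      ‖S q.1 q.2 - S p.1 p.2‖ ≤ M * ‖q.2 - p.2‖ + ‖S q.1 p.2 - S p.1 p.2‖ := by
    intro q hq
    have h1 : S q.1 q.2 - S p.1 p.2 = S q.1 (q.2 - p.2) + (S q.1 p.2 - S p.1 p.2) := by
      rw [map_sub]; abel
    rw [h1]
    refine (norm_add_le _ _).trans (add_le_add_left ?_ _)
    exact ((S q.1).le_opNorm _).trans
      (mul_le_mul_of_nonneg_right (hSbound _ hq.1) (norm_nonneg _))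
  have hb1 : Tendsto (fun q : ℝ × X => M * ‖q.2 - p.2‖)
      (nhdsWithin p (Set.Icc 0 t_f ×ˢ Set.univ)) (nhds 0) := by
    have : Tendsto (fun q : ℝ × X => M * ‖q.2 - p.2‖) (nhds p) (nhds (M * ‖p.2 - p.2‖)) := by
      exact (Continuous.mul continuous_const ((continuous_snd.sub continuous_const).norm)).tendsto p
    simpa using this.mono_left nhdsWithin_le_nhds
  have hb2 : Tendsto (fun q : ℝ × X => ‖S q.1 p.2 - S p.1 p.2‖)
      (nhdsWithin p (Set.Icc 0 t_f ×ˢ Set.univ)) (nhds 0) := by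
    have hfst : Tendsto (fun q : ℝ × X => q.1)
        (nhdsWithin p (Set.Icc 0 t_f ×ˢ Set.univ)) (nhdsWithin p.1 (Set.Icc 0 t_f)) :=
      continuousWithinAt_fst.tendsto_nhdsWithin (fun q hq => hq.1)
    have := (hScont p.2 p.1 hp1).tendsto.comp hfst
    simpa using (this.sub_const (S p.1 p.2)).norm
  have hbound : Tendsto (fun q : ℝ × X => M * ‖q.2 - p.2‖ + ‖S q.1 p.2 - S p.1 p.2‖)
      (nhdsWithin p (Set.Icc 0 t_f ×ˢ Set.univ)) (nhds 0) := by
    simpa using hb1.add hb2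
  exact squeeze_zero_norm' (eventually_nhdsWithin_of_forall key) hbound

open MeasureTheory Set Filter Topology
open scoped RealInnerProductSpace

lemma aux_weak_meas {X : Type*} [NormedAddCommGroup X] [InnerProductSpace ℝ X] [CompleteSpace X]
    {t_f : ℝ} (h : ℝ → X)
    (hcont : ∀ z : X, ContinuousOn (fun s => ⟪h s, z⟫) (Set.Icc 0 t_f)) :
    AEStronglyMeasurable h (volume.restrict (Set.Ioc (0:ℝ) t_f)) := by
  -- countable dense subset of Icc
  have hIccSep : TopologicalSpace.IsSeparable (Set.Icc (0:ℝ) t_f) :=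
    TopologicalSpace.IsSeparable.of_separableSpace _
  obtain ⟨D, hDsub, hDc, hDdense⟩ := hIccSep.exists_countable_dense_subset
  set K : Submodule ℝ X := Submodule.span ℝ (h '' D) with hK
  set V : Submodule ℝ X := K.topologicalClosure with hV
  have hmem : ∀ s ∈ Set.Icc (0:ℝ) t_f, h s ∈ V := by
    intro s hs
    rw [hV, ← Submodule.orthogonal_orthogonal_eq_closure]
    rw [Submodule.mem_orthogonal]
    intro z hz
    have hF0 : ∀ r ∈ D, ⟪h r, z⟫ = 0 := by
      intro r hr
      exact (Submodule.mem_orthogonal K z).1 hz _ (Submodule.subset_span ⟨r, hr, rfl⟩)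
    have hsD : s ∈ closure D := hDdense hs
    have hne : (nhdsWithin s D).NeBot := mem_closure_iff_nhdsWithin_neBot.mp hsD
    have t1 : Tendsto (fun r => ⟪h r, z⟫) (nhdsWithin s D) (nhds ⟪h s, z⟫) :=
      ((hcont z s hs).mono hDsub)
    have t2 : Tendsto (fun r => ⟪h r, z⟫) (nhdsWithin s D) (nhds 0) := by
      refine Tendsto.congr' ?_ (tendsto_const_nhds (α := ℝ))
      exact eventually_nhdsWithin_of_forall (fun r hr => (hF0 r hr).symm)
    have : ⟪h s, z⟫ = 0 := tendsto_nhds_unique t1 t2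
    rwa [real_inner_comm]
  -- countable set whose closure contains V
  have hVsep : TopologicalSpace.IsSeparable (V : Set X) := by
    have : TopologicalSpace.IsSeparable (K : Set X) :=
      ((hDc.image h).isSeparable).span
    rw [hV]
    simpa [Submodule.topologicalClosure_coe] using this.closure
  obtain ⟨c, hcc, hcsub⟩ := hVsep
  obtain ⟨e, he⟩ := (hcc.insert 0).exists_eq_range (Set.insert_nonempty _ _)
  have hcsub' : (V : Set X) ⊆ closure (Set.range e) := by
    rw [← he]
    exact hcsub.trans (closure_mono (Set.subset_insert _ _))
  -- finite-dimensional approximating subspaces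
  set W : ℕ → Submodule ℝ X := fun n => Submodule.span ℝ (e '' Set.Iic n) with hW
  haveI hWfd : ∀ n, FiniteDimensional ℝ (W n) := fun n =>
    FiniteDimensional.span_of_finite ℝ ((Set.finite_Iic n).image e)
  set fn : ℕ → ℝ → X := fun n s => ((W n).orthogonalProjectionOnto (h s) : X) with hfn
  have hfn_meas : ∀ n, AEStronglyMeasurable (fn n) (volume.restrict (Set.Ioc (0:ℝ) t_f)) := by
    intro n
    set b := stdOrthonormalBasis ℝ (W n)
    have hrepr : fn n = fun s =>
        ∑ i, ⟪(b i : X), h s⟫ • (b i : X) := by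
      funext s
      rw [hfn]
      simp only []
      rw [b.orthogonalProjectionOnto_apply_eq_sum]
      push_cast
      rfl
    rw [hrepr]
    refine Finset.aestronglyMeasurable_fun_sum _ (fun i _ => ?_)
    have hco : ContinuousOn (fun s => ⟪(b i : X), h s⟫) (Set.Icc 0 t_f) := by
      have := hcont (b i : X)
      exact fun s hs => ((this s hs).congr (fun r _ => real_inner_comm _ _)
        (real_inner_comm _ _) : ContinuousWithinAt _ _ _)
    have : AEStronglyMeasurable (fun s => ⟪(b i : X), h s⟫)
        (volume.restrict (Set.Icc (0:ℝ) t_f)) :=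
      hco.aestronglyMeasurable measurableSet_Icc
    exact (this.mono_measure (Measure.restrict_mono Set.Ioc_subset_Icc_self le_rfl)).smul_const _
  have htend : ∀ s ∈ Set.Ioc (0:ℝ) t_f, Tendsto (fun n => fn n s) atTop (nhds (h s)) := by
    intro s hs
    have hsIcc : s ∈ Set.Icc (0:ℝ) t_f := Set.Ioc_subset_Icc_self hs
    have hhs : h s ∈ closure (Set.range e) := hcsub' (hmem s hsIcc)
    rw [Metric.tendsto_atTop]
    intro ε hε
    obtain ⟨q, hq, hdq⟩ := Metric.mem_closure_iff.1 hhs ε hε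
    obtain ⟨i, rfl⟩ := hq
    refine ⟨i, fun n hn => ?_⟩
    have heiW : e i ∈ W n := Submodule.subset_span ⟨i, hn, rfl⟩
    have hmin : ‖h s - fn n s‖ ≤ ‖h s - e i‖ := by
      rw [hfn]
      simp only []
      rw [← Submodule.starProjection_apply, Submodule.starProjection_minimal]
      refine ciInf_le_of_le ⟨0, ?_⟩ (⟨e i, heiW⟩ : W n) le_rfl
      rintro r ⟨w, rfl⟩
      exact norm_nonneg _
    calc dist (fn n s) (h s) = ‖h s - fn n s‖ := by rw [dist_eq_norm, norm_sub_rev]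
      _ ≤ ‖h s - e i‖ := hmin
      _ = dist (h s) (e i) := (dist_eq_norm _ _).symm
      _ < ε := hdq
  refine aestronglyMeasurable_of_tendsto_ae atTop hfn_meas ?_
  exact (ae_restrict_mem measurableSet_Ioc).mono htend

open MeasureTheory Set Filter Topology

lemma aux_comp {α X Y : Type*} [MeasurableSpace α] {μ : Measure α}
    [NormedAddCommGroup X] [NormedSpace ℝ X] [NormedAddCommGroup Y] [NormedSpace ℝ Y]
    (T : α → Y →L[ℝ] X) (hT : ∀ v : Y, AEStronglyMeasurable (fun s => T s v) μ)
    (u : α → Y) (hu : AEStronglyMeasurable u μ) :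
    AEStronglyMeasurable (fun s => T s (u s)) μ := by
  have hsimple : ∀ ψ : SimpleFunc α Y, AEStronglyMeasurable (fun s => T s (ψ s)) μ := by
    intro ψ
    induction ψ using SimpleFunc.induction with
    | @const c sset hs =>
      have : (fun s => T s ((SimpleFunc.piecewise sset hs (SimpleFunc.const α c)
          (SimpleFunc.const α 0)) s)) = Set.indicator sset (fun s => T s c) := by
        funext s
        by_cases hx : s ∈ sset <;>
          simp [SimpleFunc.coe_piecewise, Set.piecewise, hx, Set.indicator]
      rw [this]
      exact (hT c).indicator hs
    | @add φ φ' hdisj hf hg =>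
      have : (fun s => T s ((φ + φ') s)) =
          fun s => T s (φ s) + T s (φ' s) := by
        funext s; simp [map_add]
      rw [this]
      exact hf.add hg
  -- replace u by a strongly measurable representative
  have hae := hu.ae_eq_mk
  have hu' := hu.stronglyMeasurable_mk
  have hmain : AEStronglyMeasurable (fun s => T s (hu.mk u s)) μ := by
    refine aestronglyMeasurable_of_tendsto_ae atTop
      (f := fun n s => T s (hu'.approx n s)) (fun n => hsimple _) ?_
    filter_upwards with s
    exact ((T s).continuous.tendsto _).comp (hu'.tendsto_approx s)
  refine hmain.congr ?_
  filter_upwards [hae] with s hs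
  rw [hs]

open MeasureTheory Set Filter Topology
set_option maxHeartbeats 1000000 in

lemma aux_param_int_meas {Y : Type*} [NormedAddCommGroup Y] [NormedSpace ℝ Y] [CompleteSpace Y]
    {t_f : ℝ} (g : ℝ × ℝ → Y)
    (hg : ContinuousOn g {p : ℝ × ℝ | 0 ≤ p.2 ∧ p.2 ≤ p.1 ∧ p.1 ≤ t_f}) :
    AEStronglyMeasurable (fun t => ∫ s in (0:ℝ)..t, g (t, s))
      (volume.restrict (Set.Ioc (0:ℝ) t_f)) := by
  set K : Set (ℝ × ℝ) := {p : ℝ × ℝ | 0 ≤ p.2 ∧ p.2 ≤ p.1 ∧ p.1 ≤ t_f} with hKdef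
  set A : Set (ℝ × ℝ) := {p : ℝ × ℝ | 0 < p.2 ∧ p.2 ≤ p.1 ∧ p.1 ≤ t_f} with hAdef
  have hAK : A ⊆ K := fun p hp => ⟨hp.1.le, hp.2⟩
  have hAmeas : MeasurableSet A := by
    have : A = {p : ℝ × ℝ | 0 < p.2} ∩ ({p : ℝ × ℝ | p.2 ≤ p.1} ∩ {p : ℝ × ℝ | p.1 ≤ t_f}) := by
      ext p; simp [hAdef, and_assoc]
    rw [this]
    exact (measurableSet_lt measurable_const measurable_snd).inter
      ((measurableSet_le measurable_snd measurable_fst).inter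
        (measurableSet_le measurable_fst measurable_const))
  have hKclosed : IsClosed K := by
    have : K = {p : ℝ × ℝ | 0 ≤ p.2} ∩ ({p : ℝ × ℝ | p.2 ≤ p.1} ∩ {p : ℝ × ℝ | p.1 ≤ t_f}) := by
      ext p; simp [hKdef, and_assoc]
    rw [this]
    exact (isClosed_le continuous_const continuous_snd).inter
      ((isClosed_le continuous_snd continuous_fst).inter
        (isClosed_le continuous_fst continuous_const))
  have hKcomp : IsCompact K := by
    refine IsCompact.of_isClosed_subset ((isCompact_Icc (a := (0:ℝ)) (b := t_f)).prod
      (isCompact_Icc (a := (0:ℝ)) (b := t_f))) hKclosed ?_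
    rintro p ⟨h1, h2, h3⟩
    exact ⟨⟨h1.trans h2, h3⟩, ⟨h1, h2.trans h3⟩⟩
  have hgK : AEStronglyMeasurable g (volume.restrict K) :=
    hg.aestronglyMeasurable_of_isCompact hKcomp hKclosed.measurableSet
  have hH : AEStronglyMeasurable (A.indicator g) (volume : Measure (ℝ × ℝ)) :=
    (aestronglyMeasurable_indicator_iff hAmeas).2
      (hgK.mono_measure (Measure.restrict_mono hAK le_rfl))
  have hH' : AEStronglyMeasurable (A.indicator g)
      ((volume.restrict (Set.Ioc (0:ℝ) t_f)).prod volume) := by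
    have : (volume.restrict (Set.Ioc (0:ℝ) t_f)).prod volume =
        ((volume : Measure (ℝ × ℝ)).restrict ((Set.Ioc (0:ℝ) t_f) ×ˢ Set.univ)) := by
      rw [Measure.volume_eq_prod, ← Measure.prod_restrict, Measure.restrict_univ]
    rw [this]
    exact hH.restrict
  have main : AEStronglyMeasurable (fun t => ∫ s, A.indicator g (t, s))
      (volume.restrict (Set.Ioc (0:ℝ) t_f)) := hH'.integral_prod_right'
  refine main.congr ?_
  filter_upwards [ae_restrict_mem measurableSet_Ioc] with t ht
  have h0t : (0:ℝ) ≤ t := ht.1.le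
  have heq : (fun s => A.indicator g (t, s)) =
      Set.indicator (Set.Ioc 0 t) (fun s => g (t, s)) := by
    funext s
    by_cases hs : s ∈ Set.Ioc (0:ℝ) t
    · have hA : (t, s) ∈ A := ⟨hs.1, hs.2, ht.2⟩
      simp [Set.indicator_of_mem hA, Set.indicator_of_mem hs]
    · have hA : (t, s) ∉ A := fun hA => hs ⟨hA.1, hA.2.1⟩
      simp [Set.indicator_of_notMem hA, Set.indicator_of_notMem hs]
  rw [heq, integral_indicator measurableSet_Ioc, intervalIntegral.integral_of_le h0t]

open scoped RealInnerProductSpace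

/-- Error bound for a single reconstructed Fourier coefficient: if `‖𝓛u - φ‖ ≤ ε` and the
noisy data satisfies `‖y^δ(t) - y(t)‖ ≤ δ` a.e., then the approximate coefficient
`α^δ = ∫₀^{t_f} ⟨u(t), y^δ(t) - ξ(t)⟩ dt` satisfies
`|⟨x₀, φ⟩ - α^δ| ≤ ε ‖x₀‖ + δ √t_f ‖u‖_{L²}`. -/
theorem single_coefficient_error_bound
    {X Y : Type*} [NormedAddCommGroup X] [InnerProductSpace ℝ X] [CompleteSpace X]
    [NormedAddCommGroup Y] [InnerProductSpace ℝ Y] [CompleteSpace Y]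
    (t_f : ℝ) (ht_f : 0 < t_f)
    (S : ℝ → X →L[ℝ] X) (M : ℝ)
    (hS0 : S 0 = ContinuousLinearMap.id ℝ X)
    (hSadd : ∀ s t : ℝ, s ∈ Set.Icc 0 t_f → t ∈ Set.Icc 0 t_f → s + t ∈ Set.Icc 0 t_f →
      S (s + t) = (S s).comp (S t))
    (hScont : ∀ x : X, ContinuousOn (fun t => S t x) (Set.Icc 0 t_f))
    (hSbound : ∀ t ∈ Set.Icc 0 t_f, ‖S t‖ ≤ M)
    (C : X →L[ℝ] Y)
    (f : ℝ → X) (hf : ContinuousOn f (Set.Icc 0 t_f))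
    (x₀ : X)
    (x : ℝ → X) (hx : ∀ t, x t = S t x₀ + ∫ s in (0:ℝ)..t, S (t - s) (f s))
    (y : ℝ → Y) (hy : ∀ t, y t = C (x t))
    (ξ : ℝ → Y) (hξ : ∀ t, ξ t = ∫ s in (0:ℝ)..t, C (S (t - s) (f s)))
    (δ : ℝ) (hδ : 0 ≤ δ)
    (yδ : ℝ → Y) (hyδmem : MemLp yδ 2 (volume.restrict (Set.Ioc (0:ℝ) t_f)))
    (hnoise : ∀ᵐ t ∂(volume.restrict (Set.Ioc (0:ℝ) t_f)), ‖yδ t - y t‖ ≤ δ)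
    (u : ℝ → Y) (hu : MemLp u 2 (volume.restrict (Set.Ioc (0:ℝ) t_f)))
    (φ : X) (ε : ℝ)
    (hctrl : ‖(∫ s in Set.Ioc (0:ℝ) t_f,
        (ContinuousLinearMap.adjoint (S s)) ((ContinuousLinearMap.adjoint C) (u s))) - φ‖ ≤ ε) :
    |⟪x₀, φ⟫ - ∫ t in Set.Ioc (0:ℝ) t_f, ⟪u t, yδ t - ξ t⟫| ≤
      ε * ‖x₀‖ +
        δ * Real.sqrt t_f * Real.sqrt (∫ t in Set.Ioc (0:ℝ) t_f, ‖u t‖ ^ 2) := by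
  classical
  set μ := volume.restrict (Set.Ioc (0:ℝ) t_f) with hμdef
  haveI : IsFiniteMeasure μ := by
    constructor
    rw [hμdef, Measure.restrict_apply_univ]
    simp [Real.volume_Ioc]
  have hjoint := aux_joint t_f M S hScont hSbound
  -- continuity of the convolution integrand
  have hconv_cont : ∀ t ∈ Set.Icc (0:ℝ) t_f,
      ContinuousOn (fun s => S (t - s) (f s)) (Set.Icc 0 t) := by
    intro t ht
    have hmaps : Set.MapsTo (fun s => (t - s, f s)) (Set.Icc 0 t)
        (Set.Icc 0 t_f ×ˢ (Set.univ : Set X)) := by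
      intro s hs
      simp only [Set.mem_prod, Set.mem_univ, and_true, Set.mem_Icc]
      exact ⟨by linarith [hs.1, hs.2], by linarith [hs.1, hs.2, ht.2]⟩
    have hin : ContinuousOn (fun s : ℝ => (t - s, f s)) (Set.Icc 0 t) := by
      refine ContinuousOn.prodMk ((continuous_const.sub continuous_id).continuousOn) ?_
      exact hf.mono (Set.Icc_subset_Icc le_rfl ht.2)
    exact hjoint.comp hin hmaps
  -- identity y = C (S t x₀) + ξ on [0, t_f]
  have hid : ∀ t ∈ Set.Icc (0:ℝ) t_f, y t = C (S t x₀) + ξ t := by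
    intro t ht
    have hii : IntervalIntegrable (fun s => S (t - s) (f s)) volume 0 t := by
      apply ContinuousOn.intervalIntegrable
      rw [Set.uIcc_of_le ht.1]
      exact hconv_cont t ht
    rw [hy, hx, map_add, hξ]
    congr 1
    exact (C.intervalIntegral_comp_comm hii).symm
  -- measurability of ξ and y
  have hmapsK : Set.MapsTo (fun p : ℝ × ℝ => (p.1 - p.2, f p.2))
      {p : ℝ × ℝ | 0 ≤ p.2 ∧ p.2 ≤ p.1 ∧ p.1 ≤ t_f} (Set.Icc 0 t_f ×ˢ (Set.univ : Set X)) := by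
    rintro p ⟨h1, h2, h3⟩
    simp only [Set.mem_prod, Set.mem_univ, and_true, Set.mem_Icc]
    exact ⟨by linarith, by linarith⟩
  have hcontK : ContinuousOn (fun p : ℝ × ℝ => C (S (p.1 - p.2) (f p.2)))
      {p : ℝ × ℝ | 0 ≤ p.2 ∧ p.2 ≤ p.1 ∧ p.1 ≤ t_f} := by
    have hin : ContinuousOn (fun p : ℝ × ℝ => (p.1 - p.2, f p.2))
        {p : ℝ × ℝ | 0 ≤ p.2 ∧ p.2 ≤ p.1 ∧ p.1 ≤ t_f} := by
      refine ContinuousOn.prodMk ((continuous_fst.sub continuous_snd).continuousOn) ?_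
      refine hf.comp continuous_snd.continuousOn ?_
      rintro p ⟨h1, h2, h3⟩
      exact ⟨h1, by linarith⟩
    exact C.continuous.comp_continuousOn (hjoint.comp hin hmapsK)
  have hξmeas : AEStronglyMeasurable ξ μ := by
    have := aux_param_int_meas (t_f := t_f) (fun p : ℝ × ℝ => C (S (p.1 - p.2) (f p.2))) hcontK
    exact this.congr (Filter.Eventually.of_forall (fun t => (hξ t).symm))
  have hCSx₀cont : ContinuousOn (fun t => C (S t x₀)) (Set.Icc 0 t_f) :=
    C.continuous.comp_continuousOn (hScont x₀)
  have hCSx₀meas : AEStronglyMeasurable (fun t => C (S t x₀)) μ :=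
    (hCSx₀cont.aestronglyMeasurable_of_isCompact isCompact_Icc
      measurableSet_Icc).mono_measure (Measure.restrict_mono Set.Ioc_subset_Icc_self le_rfl)
  have hymeas : AEStronglyMeasurable y μ := by
    refine (hCSx₀meas.add hξmeas).congr ?_
    filter_upwards [ae_restrict_mem measurableSet_Ioc] with t ht
    exact (hid t (Set.Ioc_subset_Icc_self ht)).symm
  -- the adjoint integrand
  set g : ℝ → X := fun s =>
    (ContinuousLinearMap.adjoint (S s)) ((ContinuousLinearMap.adjoint C) (u s)) with hgdef
  have hgmeas : AEStronglyMeasurable g μ := by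
    have := aux_comp (μ := μ)
      (fun s => (ContinuousLinearMap.adjoint (S s)).comp (ContinuousLinearMap.adjoint C))
      (fun v => by
        apply aux_weak_meas
        intro z
        have heq : (fun s => ⟪((ContinuousLinearMap.adjoint (S s)).comp
            (ContinuousLinearMap.adjoint C)) v, z⟫) =
            fun s => ⟪(ContinuousLinearMap.adjoint C) v, S s z⟫ := by
          funext s
          rw [ContinuousLinearMap.coe_comp', Function.comp_apply,
            ContinuousLinearMap.adjoint_inner_left]
        rw [heq]
        exact continuousOn_const.inner (hScont z))
      u hu.1
    exact this
  have hM0 : (0:ℝ) ≤ M := le_trans (norm_nonneg (S 0)) (hSbound 0 ⟨le_rfl, ht_f.le⟩)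
  have huint : Integrable u μ := hu.integrable one_le_two
  have hgbound : ∀ᵐ s ∂μ, ‖g s‖ ≤ M * ‖C‖ * ‖u s‖ := by
    filter_upwards [ae_restrict_mem measurableSet_Ioc] with s hs
    have hsIcc : s ∈ Set.Icc (0:ℝ) t_f := Set.Ioc_subset_Icc_self hs
    calc ‖g s‖ ≤ ‖ContinuousLinearMap.adjoint (S s)‖ * ‖(ContinuousLinearMap.adjoint C) (u s)‖ :=
          (ContinuousLinearMap.adjoint (S s)).le_opNorm _
      _ ≤ M * (‖ContinuousLinearMap.adjoint C‖ * ‖u s‖) := by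
          refine mul_le_mul ?_ ((ContinuousLinearMap.adjoint C).le_opNorm _) (norm_nonneg _) hM0
          rw [ContinuousLinearMap.adjoint.norm_map]
          exact hSbound s hsIcc
      _ = M * ‖C‖ * ‖u s‖ := by rw [ContinuousLinearMap.adjoint.norm_map]; ring
  have hgint : Integrable g μ :=
    Integrable.mono' ((huint.norm.const_mul (M * ‖C‖))) hgmeas hgbound
  -- inner product identity
  have hLinner : ⟪x₀, ∫ s, g s ∂μ⟫ =
      ∫ s, ⟪u s, C (S s x₀)⟫ ∂μ := by
    rw [← integral_inner (𝕜 := ℝ) hgint x₀]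
    refine integral_congr_ae (Filter.Eventually.of_forall (fun s => ?_))
    show ⟪x₀, (ContinuousLinearMap.adjoint (S s)) ((ContinuousLinearMap.adjoint C) (u s))⟫ =
      ⟪u s, C (S s x₀)⟫
    rw [real_inner_comm, ContinuousLinearMap.adjoint_inner_left,
      ContinuousLinearMap.adjoint_inner_left]
  -- integrability of the pieces
  have hI2meas : AEStronglyMeasurable (fun t => ⟪u t, C (S t x₀)⟫) μ :=
    hu.1.inner hCSx₀meas
  have hI2int : Integrable (fun t => ⟪u t, C (S t x₀)⟫) μ := by
    refine Integrable.mono' (huint.norm.mul_const (M * ‖C‖ * ‖x₀‖)) hI2meas ?_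
    filter_upwards [ae_restrict_mem measurableSet_Ioc] with t ht
    have hsIcc : t ∈ Set.Icc (0:ℝ) t_f := Set.Ioc_subset_Icc_self ht
    rw [Real.norm_eq_abs]
    refine (abs_real_inner_le_norm _ _).trans ?_
    refine mul_le_mul_of_nonneg_left ?_ (norm_nonneg _)
    calc ‖C (S t x₀)‖ ≤ ‖C‖ * ‖S t x₀‖ := C.le_opNorm _
      _ ≤ ‖C‖ * (M * ‖x₀‖) := by
          refine mul_le_mul_of_nonneg_left ?_ (norm_nonneg _)
          exact ((S t).le_opNorm _).trans
            (mul_le_mul_of_nonneg_right (hSbound t hsIcc) (norm_nonneg _))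
      _ = M * ‖C‖ * ‖x₀‖ := by ring
  have hI1meas : AEStronglyMeasurable (fun t => ⟪u t, yδ t - y t⟫) μ :=
    hu.1.inner (hyδmem.1.sub hymeas)
  have hI1bound : ∀ᵐ t ∂μ, ‖⟪u t, yδ t - y t⟫‖ ≤ δ * ‖u t‖ := by
    filter_upwards [hnoise] with t ht
    rw [Real.norm_eq_abs]
    refine (abs_real_inner_le_norm _ _).trans ?_
    calc ‖u t‖ * ‖yδ t - y t‖ ≤ ‖u t‖ * δ := mul_le_mul_of_nonneg_left ht (norm_nonneg _)
      _ = δ * ‖u t‖ := mul_comm _ _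
  have hI1int : Integrable (fun t => ⟪u t, yδ t - y t⟫) μ :=
    Integrable.mono' (huint.norm.const_mul δ) hI1meas hI1bound
  -- splitting the integral
  have hsplit : (∫ t, ⟪u t, yδ t - ξ t⟫ ∂μ) =
      (∫ t, ⟪u t, yδ t - y t⟫ ∂μ) +
      ∫ t, ⟪u t, C (S t x₀)⟫ ∂μ := by
    rw [← integral_add hI1int hI2int]
    refine integral_congr_ae ?_
    filter_upwards [ae_restrict_mem measurableSet_Ioc] with t ht
    have h2 := hid t (Set.Ioc_subset_Icc_self ht)
    have h3 : yδ t - ξ t = (yδ t - y t) + C (S t x₀) := by rw [h2]; abel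
    rw [h3, inner_add_right]
  -- key algebraic rearrangement
  have keyeq : ⟪x₀, φ⟫ - (∫ t, ⟪u t, yδ t - ξ t⟫ ∂μ) =
      ⟪x₀, φ - ∫ s, g s ∂μ⟫ -
        ∫ t, ⟪u t, yδ t - y t⟫ ∂μ := by
    rw [inner_sub_right, hsplit, hLinner]
    ring
  rw [keyeq]
  -- Cauchy-Schwarz
  have hCS : (∫ t, ‖u t‖ ∂μ) ≤
      Real.sqrt t_f * Real.sqrt (∫ t, ‖u t‖ ^ 2 ∂μ) := by
    have hun : MemLp (fun t => ‖u t‖) 2 μ := hu.norm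
    have hone : MemLp (fun _ : ℝ => (1:ℝ)) 2 μ := memLp_const 1
    set U : Lp ℝ 2 μ := hun.toLp _ with hU
    set One : Lp ℝ 2 μ := hone.toLp _ with hOne
    have hinner : ⟪U, One⟫ = ∫ t, ‖u t‖ ∂μ := by
      rw [L2.inner_def]
      refine integral_congr_ae ?_
      filter_upwards [hun.coeFn_toLp, hone.coeFn_toLp] with t h1 h2
      rw [← hU, ← hOne] at *
      rw [h1, h2]
      simp [RCLike.inner_apply]
    have hnormU : ‖U‖ = Real.sqrt (∫ t, ‖u t‖ ^ 2 ∂μ) := by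
      have h2 : ‖U‖ ^ 2 = ∫ t, ‖u t‖ ^ 2 ∂μ := by
        rw [← real_inner_self_eq_norm_sq, L2.inner_def]
        refine integral_congr_ae ?_
        filter_upwards [hun.coeFn_toLp] with t h1
        rw [← hU] at *
        rw [h1]
        simp [RCLike.inner_apply, pow_two]
      rw [← h2, Real.sqrt_sq (norm_nonneg _)]
    have hnormOne : ‖One‖ = Real.sqrt t_f := by
      have h2 : ‖One‖ ^ 2 = t_f := by
        rw [← real_inner_self_eq_norm_sq, L2.inner_def]
        have : ∫ t, ⟪One t, One t⟫ ∂μ = ∫ t, (1:ℝ) ∂μ := by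
          refine integral_congr_ae ?_
          filter_upwards [hone.coeFn_toLp] with t h1
          rw [← hOne] at *
          rw [h1]
          simp [RCLike.inner_apply]
        rw [this, integral_const, smul_eq_mul, mul_one, hμdef, measureReal_restrict_apply_univ,
          Real.volume_real_Ioc_of_le ht_f.le, sub_zero]
      rw [← h2, Real.sqrt_sq (norm_nonneg _)]
    calc (∫ t, ‖u t‖ ∂μ) = ⟪U, One⟫ := hinner.symm
      _ ≤ ‖U‖ * ‖One‖ := real_inner_le_norm _ _
      _ = Real.sqrt t_f * Real.sqrt (∫ t, ‖u t‖ ^ 2 ∂μ) := by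
          rw [hnormU, hnormOne]; ring
  have hterm1 : |⟪x₀, φ - ∫ s, g s ∂μ⟫| ≤ ε * ‖x₀‖ := by
    refine (abs_real_inner_le_norm _ _).trans ?_
    rw [norm_sub_rev]
    calc ‖x₀‖ * ‖(∫ s, g s ∂μ) - φ‖ ≤ ‖x₀‖ * ε :=
          mul_le_mul_of_nonneg_left hctrl (norm_nonneg _)
      _ = ε * ‖x₀‖ := mul_comm _ _
  have hterm2 : |∫ t, ⟪u t, yδ t - y t⟫ ∂μ| ≤
      δ * Real.sqrt t_f * Real.sqrt (∫ t, ‖u t‖ ^ 2 ∂μ) := by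
    have h1 : |∫ t, ⟪u t, yδ t - y t⟫ ∂μ| ≤
        ∫ t, δ * ‖u t‖ ∂μ := by
      rw [← Real.norm_eq_abs]
      refine (norm_integral_le_integral_norm _).trans ?_
      exact integral_mono_ae hI1int.norm (huint.norm.const_mul δ) hI1bound
    refine h1.trans ?_
    rw [integral_const_mul]
    calc δ * ∫ t, ‖u t‖ ∂μ
        ≤ δ * (Real.sqrt t_f * Real.sqrt (∫ t, ‖u t‖ ^ 2 ∂μ)) :=
          mul_le_mul_of_nonneg_left hCS hδ
      _ = δ * Real.sqrt t_f * Real.sqrt (∫ t, ‖u t‖ ^ 2 ∂μ) := by ring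
  calc |⟪x₀, φ - ∫ s, g s ∂μ⟫ -
        ∫ t, ⟪u t, yδ t - y t⟫ ∂μ|
      ≤ |⟪x₀, φ - ∫ s, g s ∂μ⟫| +
        |∫ t, ⟪u t, yδ t - y t⟫ ∂μ| := abs_sub _ _
    _ ≤ ε * ‖x₀‖ + δ * Real.sqrt t_f * Real.sqrt (∫ t, ‖u t‖ ^ 2 ∂μ) :=
        add_le_add hterm1 hterm2
end

section
/- Error estimate for the dual control reconstruction (Theorem 2.1): let {φ_k}_{k=0}^m be an orthonormal family in X, let controls u_k ∈ L²(0, t_f; Y) satisfy ‖𝓛u_k − φ_k‖_X ≤ ε_k for each 0 ≤ k ≤ m, and let y^δ be noisy data with ‖y^δ(t) − y(t)‖_Y ≤ δ for a.e. t ∈ [0,t_f], where y(t) = C x(t), x(t) = S_t x₀ + ∫₀^t S_{t−s} f(s) ds. Define x^m := Σ_{k=0}^m ⟨x₀, φ_k⟩ φ_k and x_δ^m := Σ_{k=0}^m α_k^δ φ_k with α_k^δ := ∫₀^{t_f} ⟨u_k(t), y^δ(t) − ξ(t)⟩_Y dt and ξ(t) = ∫₀^t C S_{t−s} f(s) ds.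 Then ‖x₀ − x_δ^m‖_X ≤ ‖x₀ − x^m‖_X + Σ_{k=0}^m ( ε_k ‖x₀‖_X + δ √(t_f) ‖u_k‖_{L²(0,t_f;Y)} ). -/
open MeasureTheory
open scoped RealInnerProductSpace

open Set


section Aux

variable {X Y : Type*} [NormedAddCommGroup X] [InnerProductSpace ℝ X] [CompleteSpace X]
  [NormedAddCommGroup Y] [InnerProductSpace ℝ Y] [CompleteSpace Y]

/-- Cauchy–Schwarz inequality for integrals of real functions. -/
lemma dce_integral_CS {α : Type*} [MeasurableSpace α] (μ : Measure α) (f g : α → ℝ)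
    (hf : MemLp f 2 μ) (hg : MemLp g 2 μ) :
    ∫ a, f a * g a ∂μ ≤ Real.sqrt (∫ a, f a ^ 2 ∂μ) * Real.sqrt (∫ a, g a ^ 2 ∂μ) := by
  set F := hf.toLp f with hF
  set G := hg.toLp g with hG
  have h1 : ⟪F, G⟫ = ∫ a, f a * g a ∂μ := by
    rw [L2.inner_def]
    refine integral_congr_ae ?_
    filter_upwards [hf.coeFn_toLp, hg.coeFn_toLp] with a ha hb
    simp [RCLike.inner_apply, hF, hG, ha, hb, mul_comm]
  have h2 : ⟪F, F⟫ = ∫ a, f a ^ 2 ∂μ := by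
    rw [L2.inner_def]
    refine integral_congr_ae ?_
    filter_upwards [hf.coeFn_toLp] with a ha
    simp [RCLike.inner_apply, hF, ha, sq]
  have h3 : ⟪G, G⟫ = ∫ a, g a ^ 2 ∂μ := by
    rw [L2.inner_def]
    refine integral_congr_ae ?_
    filter_upwards [hg.coeFn_toLp] with a ha
    simp [RCLike.inner_apply, hG, ha, sq]
  have hFnorm : Real.sqrt (∫ a, f a ^ 2 ∂μ) = ‖F‖ := by
    rw [← h2, real_inner_self_eq_norm_sq, Real.sqrt_sq (norm_nonneg _)]
  have hGnorm : Real.sqrt (∫ a, g a ^ 2 ∂μ) = ‖G‖ := by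
    rw [← h3, real_inner_self_eq_norm_sq, Real.sqrt_sq (norm_nonneg _)]
  rw [← h1, hFnorm, hGnorm]
  exact real_inner_le_norm F G

/-- Joint continuity of a strongly continuous, uniformly bounded, operator family. -/
lemma dce_joint_cont (t_f : ℝ) (S : ℝ → X →L[ℝ] X) (M : ℝ)
    (hScont : ∀ x : X, ContinuousOn (fun t => S t x) (Icc 0 t_f))
    (hSbound : ∀ t ∈ Icc 0 t_f, ‖S t‖ ≤ M) :
    ContinuousOn (fun p : ℝ × X => S p.1 p.2) (Icc 0 t_f ×ˢ (univ : Set X)) := by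
  rintro ⟨t₀, v₀⟩ ⟨ht₀, -⟩
  set s : Set (ℝ × X) := Icc 0 t_f ×ˢ (univ : Set X) with hs
  have hfst : Filter.Tendsto (fun p : ℝ × X => p.1) (nhdsWithin (t₀, v₀) s) (nhdsWithin t₀ (Icc 0 t_f)) := by
    apply tendsto_nhdsWithin_of_tendsto_nhds_of_eventually_within
    · exact (continuous_fst.tendsto (t₀, v₀)).mono_left nhdsWithin_le_nhds
    · exact eventually_nhdsWithin_of_forall fun p hp => hp.1
  have h2 : Filter.Tendsto (fun p : ℝ × X => S p.1 v₀) (nhdsWithin (t₀, v₀) s)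
      (nhds (S t₀ v₀)) := ((hScont v₀ t₀ ht₀).tendsto).comp hfst
  have h2' : Filter.Tendsto (fun p : ℝ × X => ‖S p.1 v₀ - S t₀ v₀‖) (nhdsWithin (t₀, v₀) s)
      (nhds 0) := tendsto_iff_norm_sub_tendsto_zero.mp h2
  have h1 : Filter.Tendsto (fun p : ℝ × X => M * ‖p.2 - v₀‖) (nhdsWithin (t₀, v₀) s)
      (nhds 0) := by
    have : Filter.Tendsto (fun p : ℝ × X => M * ‖p.2 - v₀‖) (nhds (t₀, v₀))
        (nhds (M * ‖v₀ - v₀‖)) :=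
      (continuous_const.mul ((continuous_snd.sub continuous_const).norm)).tendsto _
    simpa using this.mono_left nhdsWithin_le_nhds
  rw [ContinuousWithinAt, tendsto_iff_norm_sub_tendsto_zero]
  apply squeeze_zero' (Filter.Eventually.of_forall fun _ => norm_nonneg _)
    (eventually_nhdsWithin_of_forall ?_) (by simpa using h1.add h2')
  rintro ⟨t, v⟩ ⟨ht, -⟩
  have : S t v - S t₀ v₀ = S t (v - v₀) + (S t v₀ - S t₀ v₀) := by
    rw [map_sub]; abel
  rw [this]
  refine (norm_add_le _ _).trans (add_le_add ?_ le_rfl)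
  exact ((S t).le_opNorm _).trans (mul_le_mul_of_nonneg_right (hSbound t ht) (norm_nonneg _))

end Aux

set_option linter.unusedSectionVars false

section Atom

open ContinuousLinearMap in
lemma dce_rat_dense' : True := trivial

variable {X Y : Type*} [NormedAddCommGroup X] [InnerProductSpace ℝ X] [CompleteSpace X]

lemma dce_rat_dense (t_f : ℝ) (ht_f : 0 < t_f) :
    ∀ t ∈ Icc (0:ℝ) t_f, t ∈ closure ((Set.range ((↑) : ℚ → ℝ)) ∩ Ioo 0 t_f) := by
  intro t ht
  rw [Metric.mem_closure_iff]
  intro ε hε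
  have hlohi : max (t - ε) 0 < min (t + ε) t_f := by
    rcases ht with ⟨ht0, ht1⟩
    apply max_lt <;> apply lt_min <;> linarith
  obtain ⟨q, hq1, hq2⟩ := exists_rat_btwn hlohi
  refine ⟨q, ⟨⟨q, rfl⟩, ?_, ?_⟩, ?_⟩
  · exact lt_of_le_of_lt (le_max_right _ _) hq1
  · exact lt_of_lt_of_le hq2 (min_le_right _ _)
  · have h1 : t - ε < q := lt_of_le_of_lt (le_max_left _ _) hq1
    have h2 : (q:ℝ) < t + ε := lt_of_lt_of_le hq2 (min_le_left _ _)
    rw [Real.dist_eq, abs_sub_lt_iff]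
    constructor <;> linarith

/-- The adjoint family `t ↦ (S t)† v` is a.e. strongly measurable on `(0, t_f]`. -/
lemma dce_adjoint_aesm (t_f : ℝ) (ht_f : 0 < t_f) (S : ℝ → X →L[ℝ] X)
    (hScont : ∀ x : X, ContinuousOn (fun t => S t x) (Icc 0 t_f)) (v : X) :
    AEStronglyMeasurable (fun t => ContinuousLinearMap.adjoint (S t) v)
      (volume.restrict (Ioc 0 t_f)) := by
  classical
  set Qc : Set ℝ := (Set.range ((↑) : ℚ → ℝ)) ∩ Ioo 0 t_f with hQcdef
  have hQc_count : Qc.Countable := (Set.countable_range _).mono (Set.inter_subset_left)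
  have hQc_sub : Qc ⊆ Icc 0 t_f := fun q hq => Ioo_subset_Icc_self hq.2
  set K : Set X := (fun q : ℝ => ContinuousLinearMap.adjoint (S q) v) '' Qc with hKdef
  have hKc : K.Countable := hQc_count.image _
  set V : Submodule ℝ X := Submodule.span ℝ K with hVdef
  have claim : ∀ t ∈ Icc (0:ℝ) t_f,
      ContinuousLinearMap.adjoint (S t) v ∈ V.topologicalClosure := by
    intro t ht
    rw [← Submodule.orthogonal_orthogonal_eq_closure, Submodule.mem_orthogonal]
    intro w hw
    have hq0 : ∀ q ∈ Qc, ⟪v, S q w⟫ = 0 := by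
      intro q hq
      have hmem : ContinuousLinearMap.adjoint (S q) v ∈ V :=
        Submodule.subset_span ⟨q, hq, rfl⟩
      have h0 := (Submodule.mem_orthogonal V w).mp hw _ hmem
      rwa [ContinuousLinearMap.adjoint_inner_left] at h0
    have hcont : ContinuousOn (fun s => ⟪v, S s w⟫) (Icc 0 t_f) :=
      (innerSL ℝ v).continuous.comp_continuousOn (hScont w)
    have hne : (nhdsWithin t Qc).NeBot :=
      mem_closure_iff_nhdsWithin_neBot.mp (dce_rat_dense t_f ht_f t ht)
    have h1 : Filter.Tendsto (fun s => ⟪v, S s w⟫) (nhdsWithin t Qc)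
        (nhds (⟪v, S t w⟫)) := ((hcont t ht).mono hQc_sub)
    have h2 : Filter.Tendsto (fun s => ⟪v, S s w⟫) (nhdsWithin t Qc) (nhds 0) := by
      apply Filter.Tendsto.congr' _ (tendsto_const_nhds (α := ℝ))
      filter_upwards [eventually_nhdsWithin_of_forall hq0] with s hs using hs.symm
    have hz : ⟪v, S t w⟫ = 0 := tendsto_nhds_unique h1 h2
    rw [real_inner_comm, ContinuousLinearMap.adjoint_inner_left]
    exact hz
  obtain ⟨c, hc_count, hc_sub⟩ := ((hKc.isSeparable.span (R := ℝ)).closure :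
    TopologicalSpace.IsSeparable (closure (V : Set X)))
  obtain ⟨d, hd⟩ := (hc_count.insert 0).exists_eq_range (Set.insert_nonempty _ _)
  have hmemc : ∀ t ∈ Icc (0:ℝ) t_f,
      ContinuousLinearMap.adjoint (S t) v ∈ closure (Set.range d) := by
    intro t ht
    have h1 : ContinuousLinearMap.adjoint (S t) v ∈ closure (V : Set X) := by
      have := claim t ht
      rwa [← Submodule.topologicalClosure_coe]
    have h3 : closure (V : Set X) ⊆ closure (Set.range d) := by
      rw [← hd]
      calc closure (V : Set X) ⊆ closure c := hc_sub
        _ ⊆ closure (insert 0 c) := closure_mono (Set.subset_insert _ _)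
    exact h3 h1
  set W : ℕ → Submodule ℝ X := fun n => Submodule.span ℝ (d '' Set.Iic n) with hWdef
  haveI hWfin : ∀ n, FiniteDimensional ℝ (W n) := fun n =>
    FiniteDimensional.span_of_finite ℝ ((Set.finite_Iic n).image d)
  haveI hWcs : ∀ n, CompleteSpace (W n) := fun n => FiniteDimensional.complete ℝ _
  set h : ℝ → X := fun t => ContinuousLinearMap.adjoint (S t) v with hhdef
  set hn : ℕ → ℝ → X := fun n t => ((W n).orthogonalProjectionOnto (h t) : X) with hndef
  have hn_aesm : ∀ n, AEStronglyMeasurable (hn n) (volume.restrict (Ioc 0 t_f)) := by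
    intro n
    set b := stdOrthonormalBasis ℝ (W n) with hbdef
    have hrep : hn n = fun t => ∑ i, ⟪v, S t (b i : X)⟫ • (b i : X) := by
      funext t
      have := congrArg (Subtype.val) (b.orthogonalProjectionOnto_apply_eq_sum (h t))
      rw [hndef]
      dsimp only
      rw [this]
      push_cast
      congr 1
      funext i
      congr 1
      rw [real_inner_comm, hhdef]
      dsimp only
      rw [ContinuousLinearMap.adjoint_inner_left]
    rw [hrep]
    apply ContinuousOn.aestronglyMeasurable _ measurableSet_Ioc
    apply ContinuousOn.mono _ Ioc_subset_Icc_self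
    apply continuousOn_finset_sum
    intro i _
    exact ((innerSL ℝ v).continuous.comp_continuousOn (hScont _)).smul continuousOn_const
  have htend : ∀ t ∈ Ioc (0:ℝ) t_f,
      Filter.Tendsto (fun n => hn n t) Filter.atTop (nhds (h t)) := by
    intro t ht
    have hmem := hmemc t (Ioc_subset_Icc_self ht)
    rw [Metric.tendsto_atTop]
    intro ε hε
    obtain ⟨z, hz_mem, hz⟩ := Metric.mem_closure_iff.mp hmem ε hε
    obtain ⟨k, rfl⟩ := hz_mem
    refine ⟨k, fun n hkn => ?_⟩
    have hdk : d k ∈ W n := Submodule.subset_span ⟨k, hkn, rfl⟩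
    have hmin : ‖h t - hn n t‖ ≤ ‖h t - d k‖ := by
      rw [hndef]
      dsimp only
      rw [← Submodule.starProjection_apply, Submodule.starProjection_minimal]
      refine ciInf_le_of_le ⟨0, ?_⟩ ⟨d k, hdk⟩ le_rfl
      rintro r ⟨x, rfl⟩
      exact norm_nonneg _
    calc dist (hn n t) (h t) = ‖h t - hn n t‖ := by rw [dist_eq_norm, norm_sub_rev]
      _ ≤ ‖h t - d k‖ := hmin
      _ = dist (h t) (d k) := (dist_eq_norm _ _).symm
      _ < ε := hz
  exact aestronglyMeasurable_of_tendsto_ae Filter.atTop hn_aesm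
    ((ae_restrict_iff' measurableSet_Ioc).mpr (Filter.Eventually.of_forall
      fun t ht => htend t ht))

end Atom

section GAesm

variable {X Y : Type*} [NormedAddCommGroup X] [InnerProductSpace ℝ X] [CompleteSpace X]
  [NormedAddCommGroup Y] [InnerProductSpace ℝ Y] [CompleteSpace Y]

lemma dce_g_aesm (t_f : ℝ) (ht_f : 0 < t_f) (S : ℝ → X →L[ℝ] X)
    (hScont : ∀ x : X, ContinuousOn (fun t => S t x) (Icc 0 t_f))
    (C : X →L[ℝ] Y) (u : ℝ → Y)
    (hum : AEStronglyMeasurable u (volume.restrict (Ioc 0 t_f))) :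
    AEStronglyMeasurable
      (fun t => ContinuousLinearMap.adjoint (S t) (ContinuousLinearMap.adjoint C (u t)))
      (volume.restrict (Ioc 0 t_f)) := by
  have hsm : StronglyMeasurable (hum.mk u) := hum.stronglyMeasurable_mk
  have hsimple : ∀ ψ : SimpleFunc ℝ Y,
      AEStronglyMeasurable
        (fun t => ContinuousLinearMap.adjoint (S t) (ContinuousLinearMap.adjoint C (ψ t)))
        (volume.restrict (Ioc 0 t_f)) := by
    intro ψ
    induction ψ using SimpleFunc.induction with
    | const c hs =>
      rename_i s
      have heq : (fun t => ContinuousLinearMap.adjoint (S t) (ContinuousLinearMap.adjoint C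
          ((SimpleFunc.piecewise s hs (SimpleFunc.const _ c) (SimpleFunc.const _ 0)) t)))
          = s.indicator (fun t => ContinuousLinearMap.adjoint (S t)
              (ContinuousLinearMap.adjoint C c)) := by
        funext t
        by_cases hts : t ∈ s <;>
          simp [SimpleFunc.piecewise_apply, Set.indicator, hts]
      rw [heq]
      exact (dce_adjoint_aesm t_f ht_f S hScont _).indicator hs
    | add hdisj hf hg =>
      rename_i f g
      have heq : (fun t => ContinuousLinearMap.adjoint (S t) (ContinuousLinearMap.adjoint C
          ((f + g) t)))
          = (fun t => ContinuousLinearMap.adjoint (S t) (ContinuousLinearMap.adjoint C (f t)))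
            + (fun t => ContinuousLinearMap.adjoint (S t)
                (ContinuousLinearMap.adjoint C (g t))) := by
        funext t
        simp [map_add]
      rw [heq]
      exact hf.add hg
  have hlim : ∀ t, Filter.Tendsto
      (fun n => ContinuousLinearMap.adjoint (S t)
        (ContinuousLinearMap.adjoint C ((hsm.approx n) t)))
      Filter.atTop
      (nhds (ContinuousLinearMap.adjoint (S t)
        (ContinuousLinearMap.adjoint C (hum.mk u t)))) := by
    intro t
    exact (((ContinuousLinearMap.adjoint (S t)).continuous.comp
      (ContinuousLinearMap.adjoint C).continuous).tendsto _).comp (hsm.tendsto_approx t)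
  have h' : AEStronglyMeasurable
      (fun t => ContinuousLinearMap.adjoint (S t)
        (ContinuousLinearMap.adjoint C (hum.mk u t)))
      (volume.restrict (Ioc 0 t_f)) :=
    aestronglyMeasurable_of_tendsto_ae Filter.atTop (fun n => hsimple (hsm.approx n))
      (Filter.Eventually.of_forall hlim)
  apply h'.congr
  filter_upwards [hum.ae_eq_mk] with t ht
  rw [← ht]

end GAesm


/-- Error estimate for the dual control reconstruction (Theorem 2.1): if
`{φ_k}_{k=0}^m` is orthonormal, `‖𝓛u_k - φ_k‖ ≤ ε_k`, and the noisy data satisfies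
`‖y^δ(t) - y(t)‖ ≤ δ` a.e., then with `x^m = Σ ⟨x₀, φ_k⟩ φ_k` and
`x_δ^m = Σ α_k^δ φ_k`, `α_k^δ = ∫₀^{t_f} ⟨u_k(t), y^δ(t) - ξ(t)⟩ dt`, one has
`‖x₀ - x_δ^m‖ ≤ ‖x₀ - x^m‖ + Σ_k (ε_k ‖x₀‖ + δ √t_f ‖u_k‖_{L²})`. -/
theorem dual_control_error_estimate
    {X Y : Type*} [NormedAddCommGroup X] [InnerProductSpace ℝ X] [CompleteSpace X]
    [NormedAddCommGroup Y] [InnerProductSpace ℝ Y] [CompleteSpace Y]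
    (t_f : ℝ) (ht_f : 0 < t_f)
    (S : ℝ → X →L[ℝ] X) (M : ℝ)
    (hS0 : S 0 = ContinuousLinearMap.id ℝ X)
    (hSadd : ∀ s t : ℝ, s ∈ Set.Icc 0 t_f → t ∈ Set.Icc 0 t_f → s + t ∈ Set.Icc 0 t_f →
      S (s + t) = (S s).comp (S t))
    (hScont : ∀ x : X, ContinuousOn (fun t => S t x) (Set.Icc 0 t_f))
    (hSbound : ∀ t ∈ Set.Icc 0 t_f, ‖S t‖ ≤ M)
    (C : X →L[ℝ] Y)
    (f : ℝ → X) (hf : ContinuousOn f (Set.Icc 0 t_f))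
    (x₀ : X)
    (x : ℝ → X) (hx : ∀ t, x t = S t x₀ + ∫ s in (0:ℝ)..t, S (t - s) (f s))
    (y : ℝ → Y) (hy : ∀ t, y t = C (x t))
    (ξ : ℝ → Y) (hξ : ∀ t, ξ t = ∫ s in (0:ℝ)..t, C (S (t - s) (f s)))
    (m : ℕ) (φ : Fin (m + 1) → X) (hφ : Orthonormal ℝ φ)
    (u : Fin (m + 1) → ℝ → Y)
    (hu : ∀ k, MemLp (u k) 2 (volume.restrict (Set.Ioc (0:ℝ) t_f)))
    (ε : Fin (m + 1) → ℝ)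
    (hctrl : ∀ k, ‖(∫ s in Set.Ioc (0:ℝ) t_f,
        (ContinuousLinearMap.adjoint (S s)) ((ContinuousLinearMap.adjoint C) (u k s))) -
        φ k‖ ≤ ε k)
    (δ : ℝ) (hδ : 0 ≤ δ)
    (yδ : ℝ → Y) (hyδmem : MemLp yδ 2 (volume.restrict (Set.Ioc (0:ℝ) t_f)))
    (hnoise : ∀ᵐ t ∂(volume.restrict (Set.Ioc (0:ℝ) t_f)), ‖yδ t - y t‖ ≤ δ) :
    ‖x₀ - ∑ k : Fin (m + 1),
        (∫ t in Set.Ioc (0:ℝ) t_f, ⟪u k t, yδ t - ξ t⟫) • φ k‖ ≤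
      ‖x₀ - ∑ k : Fin (m + 1), ⟪x₀, φ k⟫ • φ k‖ +
        ∑ k : Fin (m + 1),
          (ε k * ‖x₀‖ +
            δ * Real.sqrt t_f * Real.sqrt (∫ t in Set.Ioc (0:ℝ) t_f, ‖u k t‖ ^ 2)) := by
  classical
  set ν := volume.restrict (Set.Ioc (0:ℝ) t_f) with hν
  haveI : IsFiniteMeasure ν := by
    constructor
    rw [hν, Measure.restrict_apply_univ, Real.volume_Ioc]
    exact ENNReal.ofReal_lt_top
  have hmemI : ∀ᵐ t ∂ν, t ∈ Ioc (0:ℝ) t_f := by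
    rw [hν]; exact ae_restrict_mem measurableSet_Ioc
  have hM0 : (0:ℝ) ≤ M :=
    le_trans (norm_nonneg (S 0)) (hSbound 0 (Set.left_mem_Icc.mpr ht_f.le))
  have huint : ∀ k, Integrable (u k) ν := fun k => (hu k).integrable one_le_two
  -- continuity of (t,s) ↦ S (t-s) (f s)
  have hT : ContinuousOn (fun p : ℝ × ℝ => S (p.1 - p.2) (f p.2))
      {p : ℝ × ℝ | 0 ≤ p.2 ∧ p.2 ≤ p.1 ∧ p.1 ≤ t_f} := by
    have hj := dce_joint_cont t_f S M hScont hSbound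
    apply (hj.comp (f := fun p : ℝ × ℝ => ((p.1 - p.2 : ℝ), f p.2)))
    · apply ContinuousOn.prodMk
      · exact (continuous_fst.sub continuous_snd).continuousOn
      · apply hf.comp continuous_snd.continuousOn
        rintro ⟨a, b⟩ ⟨h1, h2, h3⟩
        exact ⟨h1, le_trans h2 h3⟩
    · rintro ⟨a, b⟩ ⟨h1, h2, h3⟩
      simp only [Set.mem_setOf_eq] at h1 h2 h3
      exact ⟨⟨show (0:ℝ) ≤ a - b by linarith, show a - b ≤ t_f by linarith⟩, trivial⟩
  set w : ℝ → X := fun t => ∫ s in (0:ℝ)..t, S (t - s) (f s) with hwdef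
  have hint : ∀ t ∈ Icc (0:ℝ) t_f,
      IntervalIntegrable (fun s => S (t - s) (f s)) volume 0 t := by
    intro t ht
    apply ContinuousOn.intervalIntegrable
    rw [uIcc_of_le ht.1]
    have hc : ContinuousOn (fun s : ℝ => ((t, s) : ℝ × ℝ)) (Icc 0 t) :=
      (Continuous.prodMk_right t).continuousOn
    apply hT.comp hc
    rintro s ⟨hs0, hst⟩
    exact ⟨hs0, hst, ht.2⟩
  have hxw : ∀ t ∈ Icc (0:ℝ) t_f, ξ t = C (w t) := by
    intro t ht
    rw [hξ t, hwdef]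
    exact C.intervalIntegral_comp_comm (hint t ht)
  have hyx : ∀ t ∈ Icc (0:ℝ) t_f, y t - ξ t = C (S t x₀) := by
    intro t ht
    rw [hy t, hx t, map_add, hxw t ht]
    abel
  -- measurability of w
  have hw_aesm : AEStronglyMeasurable w ν := by
    set A : Set (ℝ × ℝ) := {p : ℝ × ℝ | 0 < p.2 ∧ p.2 ≤ p.1} with hAdef
    have hAmeas : MeasurableSet A :=
      (measurableSet_lt measurable_const measurable_snd).inter
        (measurableSet_le measurable_snd measurable_fst)
    have hTmeas : MeasurableSet {p : ℝ × ℝ | 0 ≤ p.2 ∧ p.2 ≤ p.1 ∧ p.1 ≤ t_f} :=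
      (measurableSet_le measurable_const measurable_snd).inter
        ((measurableSet_le measurable_snd measurable_fst).inter
          (measurableSet_le measurable_fst measurable_const))
    have hHm : AEStronglyMeasurable
        (fun p : ℝ × ℝ => A.indicator (fun q : ℝ × ℝ => S (q.1 - q.2) (f q.2)) p)
        (ν.prod ν) := by
      rw [aestronglyMeasurable_indicator_iff hAmeas]
      have h1 : AEStronglyMeasurable (fun q : ℝ × ℝ => S (q.1 - q.2) (f q.2))
          ((volume.prod volume).restrict {p : ℝ × ℝ | 0 ≤ p.2 ∧ p.2 ≤ p.1 ∧ p.1 ≤ t_f}) :=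
        hT.aestronglyMeasurable hTmeas
      apply h1.mono_measure
      rw [hν, Measure.prod_restrict, Measure.restrict_restrict hAmeas]
      apply Measure.restrict_mono _ le_rfl
      rintro ⟨a, b⟩ ⟨⟨h1', h2'⟩, ⟨ha1, ha2⟩, -⟩
      exact ⟨h1'.le, h2', ha2⟩
    have hW' : AEStronglyMeasurable
        (fun t => ∫ s, A.indicator (fun q : ℝ × ℝ => S (q.1 - q.2) (f q.2)) (t, s) ∂ν) ν :=
      hHm.integral_prod_right'
    apply hW'.congr
    filter_upwards [hmemI] with t ht
    have h1 : (fun s => A.indicator (fun q : ℝ × ℝ => S (q.1 - q.2) (f q.2)) (t, s))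
        = (Ioc 0 t).indicator (fun s => S (t - s) (f s)) := by
      funext s
      by_cases hs : s ∈ Ioc 0 t
      · rw [Set.indicator_of_mem hs]
        rw [Set.indicator_of_mem]
        exact ⟨hs.1, hs.2⟩
      · rw [Set.indicator_of_notMem hs, Set.indicator_of_notMem]
        intro hmem
        exact hs ⟨hmem.1, hmem.2⟩
    rw [h1, integral_indicator measurableSet_Ioc, hν,
      Measure.restrict_restrict measurableSet_Ioc,
      Set.inter_eq_self_of_subset_left (Ioc_subset_Ioc le_rfl ht.2), hwdef]
    dsimp only
    rw [intervalIntegral.integral_of_le ht.1.le]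
  have hCSx : ContinuousOn (fun t => C (S t x₀)) (Icc 0 t_f) :=
    C.continuous.comp_continuousOn (hScont x₀)
  have hCSx_aesm : AEStronglyMeasurable (fun t => C (S t x₀)) ν := by
    rw [hν]
    exact (hCSx.mono Ioc_subset_Icc_self).aestronglyMeasurable measurableSet_Ioc
  have hy_aesm : AEStronglyMeasurable y ν := by
    have hyeq : y = fun t => C (S t x₀) + C (w t) := by
      funext t; rw [hy t, hx t, map_add]
    rw [hyeq]
    exact hCSx_aesm.add (C.continuous.comp_aestronglyMeasurable hw_aesm)
  -- the key per-coefficient estimate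
  have key : ∀ k : Fin (m + 1),
      |⟪x₀, φ k⟫ - ∫ t, ⟪u k t, yδ t - ξ t⟫ ∂ν| ≤
        ε k * ‖x₀‖ + δ * Real.sqrt t_f * Real.sqrt (∫ t, ‖u k t‖ ^ 2 ∂ν) := by
    intro k
    have hctrlk := hctrl k
    set g : ℝ → X := fun t =>
      ContinuousLinearMap.adjoint (S t) (ContinuousLinearMap.adjoint C (u k t)) with hgdef
    have hg_aesm : AEStronglyMeasurable g ν := by
      rw [hν]
      exact dce_g_aesm t_f ht_f S hScont C (u k) (by rw [← hν]; exact (hu k).aestronglyMeasurable)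
    have hgbound : ∀ᵐ t ∂ν, ‖g t‖ ≤ M * ‖C‖ * ‖u k t‖ := by
      filter_upwards [hmemI] with t ht
      calc ‖g t‖ ≤ ‖ContinuousLinearMap.adjoint (S t)‖ *
            ‖ContinuousLinearMap.adjoint C (u k t)‖ := (ContinuousLinearMap.le_opNorm _ _)
        _ ≤ M * (‖C‖ * ‖u k t‖) := by
            apply mul_le_mul _ _ (norm_nonneg _) hM0
            · rw [LinearIsometryEquiv.norm_map]
              exact hSbound t (Ioc_subset_Icc_self ht)
            · calc ‖ContinuousLinearMap.adjoint C (u k t)‖ ≤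
                  ‖ContinuousLinearMap.adjoint C‖ * ‖u k t‖ :=
                    (ContinuousLinearMap.le_opNorm _ _)
                _ = ‖C‖ * ‖u k t‖ := by rw [LinearIsometryEquiv.norm_map]
        _ = M * ‖C‖ * ‖u k t‖ := by ring
    have hg_int : Integrable g ν :=
      Integrable.mono' (((huint k).norm.const_mul (M * ‖C‖))) hg_aesm hgbound
    have hA_aesm : AEStronglyMeasurable (fun t => ⟪u k t, C (S t x₀)⟫) ν :=
      (hu k).aestronglyMeasurable.inner hCSx_aesm
    have hA_bd : ∀ᵐ t ∂ν, ‖⟪u k t, C (S t x₀)⟫‖ ≤ ‖u k t‖ * (‖C‖ * (M * ‖x₀‖)) := by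
      filter_upwards [hmemI] with t ht
      calc ‖⟪u k t, C (S t x₀)⟫‖ ≤ ‖u k t‖ * ‖C (S t x₀)‖ := norm_inner_le_norm _ _
        _ ≤ ‖u k t‖ * (‖C‖ * (M * ‖x₀‖)) := by
            apply mul_le_mul_of_nonneg_left _ (norm_nonneg _)
            calc ‖C (S t x₀)‖ ≤ ‖C‖ * ‖S t x₀‖ := C.le_opNorm _
              _ ≤ ‖C‖ * (M * ‖x₀‖) := by
                  apply mul_le_mul_of_nonneg_left _ (norm_nonneg C)
                  exact ((S t).le_opNorm _).trans
                    (mul_le_mul_of_nonneg_right (hSbound t (Ioc_subset_Icc_self ht))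
                      (norm_nonneg _))
    have hA_int : Integrable (fun t => ⟪u k t, C (S t x₀)⟫) ν :=
      Integrable.mono' ((huint k).norm.mul_const (‖C‖ * (M * ‖x₀‖))) hA_aesm hA_bd
    have hAval : ∫ t, ⟪u k t, C (S t x₀)⟫ ∂ν = ⟪x₀, ∫ t, g t ∂ν⟫ := by
      rw [← integral_inner hg_int x₀]
      refine integral_congr_ae (Filter.Eventually.of_forall fun t => ?_)
      rw [hgdef]
      dsimp only
      rw [ContinuousLinearMap.adjoint_inner_right, ContinuousLinearMap.adjoint_inner_right,
        real_inner_comm]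
    have hB_aesm : AEStronglyMeasurable (fun t => ⟪u k t, yδ t - y t⟫) ν :=
      (hu k).aestronglyMeasurable.inner (hyδmem.aestronglyMeasurable.sub hy_aesm)
    have hB_bd : ∀ᵐ t ∂ν, ‖⟪u k t, yδ t - y t⟫‖ ≤ ‖u k t‖ * δ := by
      filter_upwards [hnoise] with t ht
      calc ‖⟪u k t, yδ t - y t⟫‖ ≤ ‖u k t‖ * ‖yδ t - y t‖ := norm_inner_le_norm _ _
        _ ≤ ‖u k t‖ * δ := mul_le_mul_of_nonneg_left ht (norm_nonneg _)
    have hB_int : Integrable (fun t => ⟪u k t, yδ t - y t⟫) ν :=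
      Integrable.mono' ((huint k).norm.mul_const δ) hB_aesm hB_bd
    have hsplit : ∫ t, ⟪u k t, yδ t - ξ t⟫ ∂ν =
        (∫ t, ⟪u k t, C (S t x₀)⟫ ∂ν) + ∫ t, ⟪u k t, yδ t - y t⟫ ∂ν := by
      rw [← integral_add hA_int hB_int]
      refine integral_congr_ae ?_
      filter_upwards [hmemI] with t ht
      have h1 : yδ t - ξ t = C (S t x₀) + (yδ t - y t) := by
        rw [← hyx t (Ioc_subset_Icc_self ht)]; abel
      rw [h1, inner_add_right]
    have hCS : ∫ t, ‖u k t‖ ∂ν ≤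
        Real.sqrt (∫ t, ‖u k t‖ ^ 2 ∂ν) * Real.sqrt t_f := by
      have h1 := dce_integral_CS ν (fun t => ‖u k t‖) (fun _ => 1) (hu k).norm
        (memLp_const 1)
      simp only [mul_one, one_pow] at h1
      have h2 : ∫ _t, (1:ℝ) ∂ν = t_f := by
        rw [integral_const, smul_eq_mul, mul_one, hν, measureReal_def, Measure.restrict_apply_univ,
          Real.volume_Ioc, sub_zero, ENNReal.toReal_ofReal ht_f.le]
      rwa [h2] at h1
    have hBval : |∫ t, ⟪u k t, yδ t - y t⟫ ∂ν| ≤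
        δ * Real.sqrt t_f * Real.sqrt (∫ t, ‖u k t‖ ^ 2 ∂ν) := by
      calc |∫ t, ⟪u k t, yδ t - y t⟫ ∂ν| = ‖∫ t, ⟪u k t, yδ t - y t⟫ ∂ν‖ :=
            (Real.norm_eq_abs _).symm
        _ ≤ ∫ t, ‖⟪u k t, yδ t - y t⟫‖ ∂ν := norm_integral_le_integral_norm _
        _ ≤ ∫ t, ‖u k t‖ * δ ∂ν :=
            integral_mono_ae hB_int.norm ((huint k).norm.mul_const δ) hB_bd
        _ = δ * ∫ t, ‖u k t‖ ∂ν := by rw [integral_mul_const]; ring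
        _ ≤ δ * (Real.sqrt (∫ t, ‖u k t‖ ^ 2 ∂ν) * Real.sqrt t_f) :=
            mul_le_mul_of_nonneg_left hCS hδ
        _ = δ * Real.sqrt t_f * Real.sqrt (∫ t, ‖u k t‖ ^ 2 ∂ν) := by ring
    have hLb : |⟪x₀, φ k⟫ - ∫ t, ⟪u k t, C (S t x₀)⟫ ∂ν| ≤ ε k * ‖x₀‖ := by
      rw [hAval, ← inner_sub_right]
      calc |⟪x₀, φ k - ∫ t, g t ∂ν⟫| ≤ ‖x₀‖ * ‖φ k - ∫ t, g t ∂ν‖ :=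
            abs_real_inner_le_norm _ _
        _ = ‖(∫ t, g t ∂ν) - φ k‖ * ‖x₀‖ := by rw [norm_sub_rev]; ring
        _ ≤ ε k * ‖x₀‖ := mul_le_mul_of_nonneg_right hctrlk (norm_nonneg _)
    calc |⟪x₀, φ k⟫ - ∫ t, ⟪u k t, yδ t - ξ t⟫ ∂ν|
        = |(⟪x₀, φ k⟫ - ∫ t, ⟪u k t, C (S t x₀)⟫ ∂ν) +
            (-(∫ t, ⟪u k t, yδ t - y t⟫ ∂ν))| := by rw [hsplit]; ring_nf
      _ ≤ |⟪x₀, φ k⟫ - ∫ t, ⟪u k t, C (S t x₀)⟫ ∂ν| +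
            |(-(∫ t, ⟪u k t, yδ t - y t⟫ ∂ν))| := abs_add_le _ _
      _ = |⟪x₀, φ k⟫ - ∫ t, ⟪u k t, C (S t x₀)⟫ ∂ν| +
            |∫ t, ⟪u k t, yδ t - y t⟫ ∂ν| := by rw [abs_neg]
      _ ≤ ε k * ‖x₀‖ + δ * Real.sqrt t_f * Real.sqrt (∫ t, ‖u k t‖ ^ 2 ∂ν) :=
            add_le_add hLb hBval
  -- assembling
  have hdecomp : x₀ - ∑ k : Fin (m + 1), (∫ t, ⟪u k t, yδ t - ξ t⟫ ∂ν) • φ k =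
      (x₀ - ∑ k : Fin (m + 1), ⟪x₀, φ k⟫ • φ k) +
        ∑ k : Fin (m + 1), (⟪x₀, φ k⟫ - ∫ t, ⟪u k t, yδ t - ξ t⟫ ∂ν) • φ k := by
    simp only [sub_smul]
    rw [Finset.sum_sub_distrib]
    abel
  rw [hdecomp]
  refine (norm_add_le _ _).trans (add_le_add le_rfl ?_)
  refine (norm_sum_le _ _).trans ?_
  apply Finset.sum_le_sum
  intro k _
  rw [norm_smul, Real.norm_eq_abs, hφ.1 k, mul_one]
  exact key k
end
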